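/- Let λ be an uncountable cardinal and let B be a Boolean group of cardinality λ. Then the following are equivalent: (i) for every infinite cardinal κ < λ and every positive integer n, B → (n)_κ^FS, i.e., for every colouring c : B → C with |C| ≤ κ there exists X ⊆ B with |X| = n such that FS(X) is monochromatic for c; (ii) λ is a strong limit cardinal, i.e., 2^μ < λ for every cardinal μ < λ. -/

import Mathlib

universe u

/-- `FS X` is the set of finite sums (with no repetitions) of elements of `X`. -/
def FS {G : Type*} [AddCommMonoid G] (X : Set G) : Set G :=
  {g | ∃ F : Finset G, F.Nonempty ∧ ↑F ⊆ X ∧ g = ∑ x ∈ F, x}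

open Cardinal


/-- Homogeneity property: every colouring of `r`-subsets of a type of size `> θ`
with at most `κ` colours has a homogeneous set of size `m`. -/
def HomProp (κ : Cardinal.{u}) (r m : ℕ) (θ : Cardinal.{u}) : Prop :=
  ∀ (A : Type u), θ < #A → ∀ (C : Type u), #C ≤ κ → ∀ c : Finset A → C,
    ∃ (X : Finset A) (k : C), X.card = m ∧ ∀ Y ⊆ X, Y.card = r → c Y = k

lemma homProp_zero {κ : Cardinal.{u}} (hκ : ℵ₀ ≤ κ) (m : ℕ) : HomProp κ 0 m κ := by
  intro A hA C _ c
  have : Infinite A := by rw [Cardinal.infinite_iff]; exact hκ.trans hA.le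
  obtain ⟨X, hX⟩ := Infinite.exists_subset_card_eq A m
  exact ⟨X, c ∅, hX, fun Y _ hY => by rw [Finset.card_eq_zero.mp hY]⟩

private lemma min_congr {A : Type u} {W : A → A → Prop} (wfW : WellFounded W)
    (s t : Set A) (hs : s.Nonempty) (ht : t.Nonempty) (h : s = t) :
    wfW.min s hs = wfW.min t ht := by subst h; rfl

lemma homProp_step {κ : Cardinal.{u}} (hκ : ℵ₀ ≤ κ) (r m : ℕ) (θ : Cardinal.{u}) (hθ : κ ≤ θ)
    (IH : HomProp κ r m θ) : HomProp κ (r + 1) m (2 ^ Order.succ θ) := by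
  classical
  intro A hA C hC c
  set σ : Cardinal.{u} := Order.succ θ with hσdef
  have hθinf : ℵ₀ ≤ θ := hκ.trans hθ
  have hσinf : ℵ₀ ≤ σ := hθinf.trans (Order.le_succ θ)
  set D := σ.ord.ToType with hD
  have hmkD : #D = σ := Cardinal.mk_ord_toType σ
  -- a well-order on A
  have wfW : WellFounded (WellOrderingRel : A → A → Prop) :=
    (WellOrderingRel.isWellOrder (α := A)).toIsWellFounded.wf
  -- goodness
  set Good : A → Set A → A → Prop := fun x S y =>
    y ∉ S ∧ ∀ R : Finset A, ↑R ⊆ S → R.card = r → c (insert y R) = c (insert x R)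
    with hGood
  -- the recursion
  set F : A → ∀ o : D, (∀ o' : D, o' < o → A) → A := fun x o ih =>
    if hex : ∃ y, Good x {a | ∃ o' : D, ∃ h : o' < o, ih o' h = a} y then
      wfW.min {y | Good x {a | ∃ o' : D, ∃ h : o' < o, ih o' h = a} y} hex
    else x with hF
  set p : A → D → A := fun x => WellFounded.fix wellFounded_lt (F x) with hpdef
  have hp : ∀ x o, p x o = F x o (fun o' _ => p x o') := fun x o =>
    WellFounded.fix_eq _ _ _
  set prev : A → D → Set A := fun x o => p x '' {o' | o' < o} with hprevdef
  have hprev : ∀ x o, {a | ∃ o' : D, ∃ h : o' < o, p x o' = a} = prev x o := by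
    intro x o
    ext a
    simp only [hprevdef, Set.mem_image, Set.mem_setOf_eq]
    exact ⟨fun ⟨o', h, he⟩ => ⟨o', h, he⟩, fun ⟨o', h, he⟩ => ⟨o', h, he⟩⟩
  have hp' : ∀ x o, p x o =
      if hex : ∃ y, Good x (prev x o) y then wfW.min {y | Good x (prev x o) y} hex else x := by
    intro x o
    rw [hp x o, hF]
    simp only [hprev x o]
  by_cases hcase : ∃ x : A, ∀ o : D, p x o ≠ x
  · -- case A : get an end-homogeneous sequence
    obtain ⟨x, hx⟩ := hcase
    have hgood : ∀ o : D, Good x (prev x o) (p x o) := by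
      intro o
      have hex : ∃ y, Good x (prev x o) y := by
        refine ⟨x, ?_, fun R _ _ => rfl⟩
        rintro ⟨o', -, ho'⟩
        exact hx o' ho'
      have h1 := hp' x o
      rw [dif_pos hex] at h1
      rw [h1]
      exact wfW.min_mem _ hex
    have hinj : Function.Injective (p x) := by
      intro o1 o2 h
      by_contra hne
      rcases lt_or_gt_of_ne hne with h' | h'
      · exact (hgood o2).1 ⟨o1, h', h⟩
      · exact (hgood o1).1 ⟨o2, h', h.symm⟩
    obtain ⟨X', k, hX'card, hX'hom⟩ := IH D (by rw [hmkD]; exact Order.lt_succ θ) C hC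
      (fun I => c (insert x (I.image (p x))))
    refine ⟨X'.image (p x), k, ?_, ?_⟩
    · rw [Finset.card_image_of_injective _ hinj, hX'card]
    · intro Y hY hYcard
      obtain ⟨J, hJsub, hJim⟩ := Finset.subset_image_iff.mp hY
      have hJcard : J.card = r + 1 := by
        rw [← hJim, Finset.card_image_of_injective _ hinj] at hYcard
        exact hYcard
      have hJne : J.Nonempty := Finset.card_pos.mp (by omega)
      set o' := J.max' hJne with ho'def
      have ho'J : o' ∈ J := J.max'_mem hJne
      set J' := J.erase o' with hJ'def
      have hJ'card : J'.card = r := by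
        rw [hJ'def, Finset.card_erase_of_mem ho'J, hJcard]
        omega
      have hsub2 : ↑(J'.image (p x)) ⊆ prev x o' := by
        intro a ha
        simp only [Finset.coe_image, Set.mem_image, Finset.mem_coe] at ha
        obtain ⟨o'', ho'', rfl⟩ := ha
        exact ⟨o'', lt_of_le_of_ne (J.le_max' o'' (Finset.mem_of_mem_erase ho''))
          (Finset.ne_of_mem_erase ho''), rfl⟩
      have hgood' := (hgood o').2 (J'.image (p x)) hsub2
        (by rw [Finset.card_image_of_injective _ hinj, hJ'card])
      have hY2 : Y = insert (p x o') (J'.image (p x)) := by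
        rw [← hJim, ← Finset.image_insert, hJ'def, Finset.insert_erase ho'J]
      rw [hY2, hgood']
      exact hX'hom J' ((Finset.erase_subset _ _).trans hJsub) hJ'card
  · -- case B : counting contradiction
    exfalso
    push_neg at hcase
    set hgt : A → D := fun x => wellFounded_lt.min {o | p x o = x} (hcase x) with hgtdef
    have hpht : ∀ x, p x (hgt x) = x := fun x => wellFounded_lt.min_mem _ (hcase x)
    have hmin : ∀ x o, o < hgt x → p x o ≠ x := fun x o ho h =>
      wellFounded_lt.not_lt_min {o | p x o = x} (x := o) h ho
    have key : ∀ x y : A, hgt x = hgt y →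
        (∀ I : Finset D, c (insert x (I.image (p x))) = c (insert y (I.image (p y)))) →
        x = y := by
      intro x y hh hg
      have main : ∀ o : D, o ≤ hgt x → p x o = p y o := by
        intro o
        induction o using WellFoundedLT.induction with
        | ind o IHo =>
          intro ho
          have hIH : ∀ o' : D, o' < o → p x o' = p y o' := fun o' h' =>
            IHo o' h' ((h'.trans_le ho).le)
          have hprevs : prev x o = prev y o := by
            ext a
            constructor <;> rintro ⟨o'', h'', rfl⟩
            · exact ⟨o'', h'', (hIH o'' h'').symm⟩
            · exact ⟨o'', h'', hIH o'' h''⟩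
          have hiff : ∀ R : Finset A, ↑R ⊆ prev x o → R.card = r →
              c (insert x R) = c (insert y R) := by
            intro R hR _
            obtain ⟨I, hIsub, hIim⟩ := Finset.subset_set_image_iff.mp hR
            have him : I.image (p y) = I.image (p x) :=
              Finset.image_congr fun o'' ho'' => (hIH o'' (hIsub ho'')).symm
            rw [← hIim]
            exact (hg I).trans (by rw [him])
          have hGs : {z | Good x (prev x o) z} = {z | Good y (prev y o) z} := by
            rw [← hprevs]
            ext z
            simp only [hGood, Set.mem_setOf_eq, and_congr_right_iff]
            intro _
            constructor
            · intro h2 R hR hc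
              rw [h2 R hR hc, hiff R hR hc]
            · intro h2 R hR hc
              rw [h2 R hR hc, ← hiff R hR hc]
          have hnx : x ∉ prev x o := by
            rintro ⟨o'', h'', hpx⟩
            exact hmin x o'' (h''.trans_le ho) hpx
          have hny : y ∉ prev y o := by
            rintro ⟨o'', h'', hpy⟩
            exact hmin y o'' (h''.trans_le (hh ▸ ho)) hpy
          have hexx : ∃ z, Good x (prev x o) z := ⟨x, hnx, fun R _ _ => rfl⟩
          have hexy : ∃ z, Good y (prev y o) z := ⟨y, hny, fun R _ _ => rfl⟩
          rw [hp' x o, hp' y o, dif_pos hexx, dif_pos hexy]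
          exact min_congr wfW _ _ hexx hexy hGs
      have h1 := main (hgt x) le_rfl
      rw [hpht x, hh, hpht y] at h1
      exact h1
    have hinjΦ : Function.Injective
        (fun x : A => (hgt x, fun I : Finset D => c (insert x (I.image (p x))))) := by
      intro x y hxy
      simp only [Prod.mk.injEq] at hxy
      exact key x y hxy.1 (fun I => congrFun hxy.2 I)
    have hcard : #A ≤ #(D × (Finset D → C)) := Cardinal.mk_le_of_injective hinjΦ
    have hDinf : Infinite D := by rw [Cardinal.infinite_iff, hmkD]; exact hσinf
    have hCne : Nonempty C := ⟨c ∅⟩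
    have h1 : #(D × (Finset D → C)) = σ * (#C ^ σ) := by
      rw [Cardinal.mk_prod, Cardinal.lift_id, Cardinal.lift_id, hmkD, ← Cardinal.power_def,
        Cardinal.mk_finset_of_infinite, hmkD]
    have h2 : #C ^ σ ≤ 2 ^ σ := by
      calc #C ^ σ ≤ κ ^ σ := Cardinal.power_le_power_right hC
      _ ≤ σ ^ σ := Cardinal.power_le_power_right (hθ.trans (Order.le_succ θ))
      _ = 2 ^ σ := Cardinal.power_self_eq hσinf
    have h3 : σ * (#C ^ σ) ≤ 2 ^ σ := by
      calc σ * (#C ^ σ) ≤ 2 ^ σ * 2 ^ σ := mul_le_mul' (Cardinal.cantor σ).le h2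
      _ = 2 ^ (σ + σ) := (Cardinal.power_add _ _ _).symm
      _ = 2 ^ σ := by rw [Cardinal.add_eq_self hσinf]
    rw [h1] at hcard
    exact absurd (hcard.trans h3) (not_le.mpr hA)


lemma exists_homProp (κ lam : Cardinal.{u}) (hκ : ℵ₀ ≤ κ) (hκlam : κ < lam)
    (hSL : ∀ μ : Cardinal.{u}, μ < lam → (2 : Cardinal.{u}) ^ μ < lam) (m : ℕ) (r : ℕ) :
    ∃ θ : Cardinal.{u}, κ ≤ θ ∧ θ < lam ∧ HomProp κ r m θ := by
  induction r with
  | zero => exact ⟨κ, le_rfl, hκlam, homProp_zero hκ m⟩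
  | succ r ih =>
    obtain ⟨θ, hκθ, hθlam, hHom⟩ := ih
    refine ⟨2 ^ Order.succ θ, ?_, ?_, homProp_step hκ r m θ hκθ hHom⟩
    · exact hκθ.trans ((Order.le_succ θ).trans (Cardinal.cantor _).le)
    · exact hSL _ ((Order.succ_le_of_lt (Cardinal.cantor θ)).trans_lt (hSL θ hθlam))

/-- The combinatorial counting fact over `F₂`. -/
lemma card_filter_sum_eq_one (n : ℕ) (G : Finset (Fin n)) (hG : G.Nonempty) :
    (Finset.univ.filter fun w : Fin n → ZMod 2 => (∑ j ∈ G, w j) = 1).card = 2 ^ (n - 1) := by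
  classical
  obtain ⟨j₀, hj₀⟩ := hG
  have hsum : ∀ w : Fin n → ZMod 2,
      (∑ j ∈ G, Function.update w j₀ (w j₀ + 1) j) = (∑ j ∈ G, w j) + 1 := by
    intro w
    rw [Finset.sum_update_of_mem hj₀, ← Finset.add_sum_erase G w hj₀, Finset.erase_eq]
    ring
  have h01 : ∀ a : ZMod 2, a = 0 ∨ a = 1 := by decide
  have haa : ∀ a : ZMod 2, a + 1 + 1 = a := by decide
  have hbij : (Finset.univ.filter fun w : Fin n → ZMod 2 => (∑ j ∈ G, w j) = 1).card
      = (Finset.univ.filter fun w : Fin n → ZMod 2 => ¬((∑ j ∈ G, w j) = 1)).card := by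
    apply Finset.card_nbij' (i := fun w => Function.update w j₀ (w j₀ + 1))
      (j := fun w => Function.update w j₀ (w j₀ + 1))
    · intro w hw
      simp only [Finset.mem_coe, Finset.mem_filter, Finset.mem_univ, true_and] at hw ⊢
      rw [hsum w, hw]
      decide
    · intro w hw
      simp only [Finset.mem_coe, Finset.mem_filter, Finset.mem_univ, true_and] at hw ⊢
      rcases h01 (∑ j ∈ G, w j) with h | h
      · rw [hsum w, h]; decide
      · exact absurd h hw
    · intro w _
      funext j
      rcases eq_or_ne j j₀ with rfl | hj
      · dsimp only; rw [Function.update_self, Function.update_self, haa]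
      · dsimp only; rw [Function.update_of_ne hj, Function.update_of_ne hj]
    · intro w _
      funext j
      rcases eq_or_ne j j₀ with rfl | hj
      · dsimp only; rw [Function.update_self, Function.update_self, haa]
      · dsimp only; rw [Function.update_of_ne hj, Function.update_of_ne hj]
  have htot := Finset.card_filter_add_card_filter_not
    (s := (Finset.univ : Finset (Fin n → ZMod 2)))
    (p := fun w => (∑ j ∈ G, w j) = 1)
  have hcardW : (Finset.univ : Finset (Fin n → ZMod 2)).card = 2 ^ n := by
    rw [Finset.card_univ, Fintype.card_fun]
    simp
  have hn : 0 < n := j₀.pos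
  have hpow : 2 * 2 ^ (n - 1) = 2 ^ n := by
    rw [← pow_succ']
    congr 1
    exact Nat.succ_pred_eq_of_pos hn
  rw [hcardW] at htot
  have key : 2 * (Finset.univ.filter fun w : Fin n → ZMod 2 => ¬((∑ j ∈ G, w j) = 1)).card
      = 2 ^ n := by
    rw [← htot, hbij, two_mul]
  rw [hbij]
  exact Nat.eq_of_mul_eq_mul_left (by norm_num) (key.trans hpow.symm)

lemma zmod2_cases : ∀ a : ZMod 2, a = 0 ∨ a = 1 := by decide
lemma zmod2_one_of_ne : ∀ a : ZMod 2, a ≠ 0 → a = 1 := by decide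
lemma zmod2_zero_ne_one : (0 : ZMod 2) ≠ 1 := by decide

lemma pos_direction {B : Type u} [AddCommGroup B] (hB2 : ∀ x : B, x + x = 0)
    {lam : Cardinal.{u}} (hlam : ℵ₀ < lam) (hB : #B = lam)
    (hSL : ∀ μ : Cardinal.{u}, μ < lam → (2 : Cardinal.{u}) ^ μ < lam)
    (κ : Cardinal.{u}) (hκ : ℵ₀ ≤ κ) (hκlam : κ < lam) (n : ℕ) (hn : 0 < n)
    (C : Type u) (c : B → C) (hC : #C ≤ κ) :
    ∃ X : Set B, X.ncard = n ∧ ∃ k, ∀ s ∈ FS X, c s = k := by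
  classical
  haveI : Fact (Nat.Prime 2) := ⟨Nat.prime_two⟩
  letI : Module (ZMod 2) B := AddCommGroup.zmodModule (n := 2) (by
    intro x; rw [two_nsmul, hB2])
  set ι := Module.Free.ChooseBasisIndex (ZMod 2) B with hιdef
  set b : Module.Basis ι (ZMod 2) B := Module.Free.chooseBasis (ZMod 2) B with hbdef
  -- cardinality of ι is lam
  have hBe : #B = #(ι →₀ ZMod 2) := Cardinal.mk_congr b.repr.toEquiv
  have hsupp_inj : Function.Injective (fun f : ι →₀ ZMod 2 => f.support) := by
    intro f g h
    have h' : f.support = g.support := h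
    ext i
    by_cases hi : i ∈ f.support
    · have hi' : i ∈ g.support := h' ▸ hi
      rw [Finsupp.mem_support_iff] at hi hi'
      rw [zmod2_one_of_ne _ hi, zmod2_one_of_ne _ hi']
    · have hi' : ¬ i ∈ g.support := h' ▸ hi
      rw [Finsupp.mem_support_iff, not_not] at hi hi'
      rw [hi, hi']
  have hBleF : #B ≤ #(Finset ι) := by
    rw [hBe]; exact Cardinal.mk_le_of_injective hsupp_inj
  haveI hBinf : Infinite B := by
    rw [Cardinal.infinite_iff, hB]; exact hlam.le
  have hιinf : Infinite ι := by
    by_contra hfin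
    rw [not_infinite_iff_finite] at hfin
    haveI : Fintype ι := Fintype.ofFinite ι
    haveI : Finite B := Finite.of_injective
      (fun x : B => (b.repr x).support) (hsupp_inj.comp b.repr.toEquiv.injective)
    exact not_finite B
  have hmkι : #ι = lam := by
    apply le_antisymm
    · have : #ι ≤ #(ι →₀ ZMod 2) := Cardinal.mk_le_of_injective
        (Finsupp.single_left_injective (one_ne_zero) : Function.Injective
          (fun i : ι => Finsupp.single i (1 : ZMod 2)))
      rw [← hBe, hB] at this
      exact this
    · rw [← hB]
      rw [Cardinal.mk_finset_of_infinite ι] at hBleF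
      exact hBleF
  -- Ramsey
  obtain ⟨θ, hκθ, hθlam, hHom⟩ := exists_homProp κ lam hκ hκlam hSL (2 ^ n) (2 ^ (n - 1))
  obtain ⟨X', k, hX'card, hX'hom⟩ := hHom ι (by rw [hmkι]; exact hθlam) C hC
    (fun I => c (∑ i ∈ I, b i))
  -- the embedding of the cube
  have hcardW : Fintype.card (Fin n → ZMod 2) = 2 ^ n := by
    rw [Fintype.card_fun]
    simp
  set e0 : (Fin n → ZMod 2) ≃ {z // z ∈ X'} :=
    (Fintype.equivFinOfCardEq (by rw [hcardW, hX'card])).trans X'.equivFin.symm with he0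
  set e : (Fin n → ZMod 2) → ι := fun w => (e0 w : ι) with hedef
  have heinj : Function.Injective e := fun w w' h => e0.injective (Subtype.ext h)
  have heX' : ∀ w, e w ∈ X' := fun w => (e0 w).2
  -- the generators
  set xx : Fin n → B := fun j => ∑ w : Fin n → ZMod 2, (w j) • b (e w) with hxxdef
  have hsmul : ∀ (a : ZMod 2) (v : B), a • v = if a = 1 then v else 0 := by
    intro a v
    rcases zmod2_cases a with rfl | rfl
    · rw [zero_smul, if_neg zmod2_zero_ne_one]
    · rw [one_smul, if_pos rfl]
  set T : Finset (Fin n) → Finset (Fin n → ZMod 2) := fun G =>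
    Finset.univ.filter (fun w : Fin n → ZMod 2 => (∑ j ∈ G, w j) = 1) with hTdef
  have hsum : ∀ G : Finset (Fin n), (∑ j ∈ G, xx j) = ∑ w ∈ T G, b (e w) := by
    intro G
    rw [hxxdef]
    rw [Finset.sum_comm]
    have h1 : ∀ w : Fin n → ZMod 2, (∑ j ∈ G, (w j) • b (e w)) = (∑ j ∈ G, w j) • b (e w) := by
      intro w
      rw [Finset.sum_smul]
    rw [Finset.sum_congr rfl (fun w _ => h1 w)]
    rw [Finset.sum_congr rfl (fun w _ => hsmul (∑ j ∈ G, w j) (b (e w)))]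
    rw [← Finset.sum_filter]
  have hne_zero : ∀ G : Finset (Fin n), G.Nonempty → (∑ j ∈ G, xx j) ≠ 0 := by
    intro G hG h0
    have hcard := card_filter_sum_eq_one n G hG
    have hTne : (T G).Nonempty := by
      rw [← Finset.card_pos, hTdef, hcard]
      positivity
    rw [hsum G] at h0
    have h0' : (∑ i ∈ (T G).image e, b i) = 0 := by
      rw [Finset.sum_image (fun w _ w' _ h => heinj h)]
      exact h0
    have hione : ∀ i ∈ (T G).image e, (1 : ZMod 2) = 0 := by
      apply linearIndependent_iff'.mp b.linearIndependent ((T G).image e) (fun _ => 1)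
      simpa [one_smul] using h0'
    obtain ⟨w, hw⟩ := hTne
    exact one_ne_zero (hione (e w) (Finset.mem_image_of_mem e hw))
  have hxxinj : Function.Injective xx := by
    intro j j' hjj
    by_contra hne
    have hpair : ({j, j'} : Finset (Fin n)).Nonempty := ⟨j, by simp⟩
    apply hne_zero {j, j'} hpair
    rw [Finset.sum_pair hne, hjj, hB2]
  have hcolour : ∀ G : Finset (Fin n), G.Nonempty → c (∑ j ∈ G, xx j) = k := by
    intro G hG
    rw [hsum G]
    have himsub : (T G).image e ⊆ X' := by
      intro i hi
      obtain ⟨w, _, rfl⟩ := Finset.mem_image.mp hi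
      exact heX' w
    have himcard : ((T G).image e).card = 2 ^ (n - 1) := by
      rw [Finset.card_image_of_injective _ heinj, hTdef]
      exact card_filter_sum_eq_one n G hG
    have := hX'hom ((T G).image e) himsub himcard
    rw [← this, Finset.sum_image (fun w _ w' _ h => heinj h)]
  refine ⟨Set.range xx, ?_, k, ?_⟩
  · rw [← Set.image_univ, ← Finset.coe_univ, ← Finset.coe_image, Set.ncard_coe_finset,
      Finset.card_image_of_injective _ hxxinj, Finset.card_univ, Fintype.card_fin]
  · rintro s ⟨F, hFne, hFsub, rfl⟩
    set G : Finset (Fin n) := Finset.univ.filter (fun j => xx j ∈ F) with hGdef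
    have hFG : G.image xx = F := by
      ext y
      simp only [Finset.mem_image, hGdef, Finset.mem_filter, Finset.mem_univ, true_and]
      constructor
      · rintro ⟨j, hj, rfl⟩; exact hj
      · intro hy
        obtain ⟨j, rfl⟩ := hFsub hy
        exact ⟨j, hy, rfl⟩
    have hGne : G.Nonempty := by
      obtain ⟨y, hy⟩ := hFne
      obtain ⟨j, rfl⟩ := hFsub hy
      exact ⟨j, by simp [hGdef, hy]⟩
    rw [← hFG, Finset.sum_image (fun w _ w' _ h => hxxinj h)]
    exact hcolour G hGne


lemma zmod2_one_add_one' : (1 : ZMod 2) + 1 = 0 := by decide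

lemma zmod2_one_of_ne' : ∀ a : ZMod 2, a ≠ 0 → a = 1 := by decide

/-- For a `ZMod 2`-module of infinite cardinality, the basis has the same cardinality. -/
lemma mk_chooseBasisIndex (M : Type u) [AddCommGroup M] [Module (ZMod 2) M]
    (hM : ℵ₀ ≤ #M) :
    haveI : Fact (Nat.Prime 2) := ⟨Nat.prime_two⟩
    #(Module.Free.ChooseBasisIndex (ZMod 2) M) = #M := by
  haveI : Fact (Nat.Prime 2) := ⟨Nat.prime_two⟩
  set ι := Module.Free.ChooseBasisIndex (ZMod 2) M with hιdef
  set b : Module.Basis ι (ZMod 2) M := Module.Free.chooseBasis (ZMod 2) M with hbdef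
  have hBe : #M = #(ι →₀ ZMod 2) := Cardinal.mk_congr b.repr.toEquiv
  have hsupp_inj : Function.Injective (fun f : ι →₀ ZMod 2 => f.support) := by
    intro f g h
    have h' : f.support = g.support := h
    ext i
    by_cases hi : i ∈ f.support
    · have hi' : i ∈ g.support := h' ▸ hi
      rw [Finsupp.mem_support_iff] at hi hi'
      rw [zmod2_one_of_ne' _ hi, zmod2_one_of_ne' _ hi']
    · have hi' : ¬ i ∈ g.support := h' ▸ hi
      rw [Finsupp.mem_support_iff, not_not] at hi hi'
      rw [hi, hi']
  have hBleF : #M ≤ #(Finset ι) := by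
    rw [hBe]; exact Cardinal.mk_le_of_injective hsupp_inj
  haveI hMinf : Infinite M := by rw [Cardinal.infinite_iff]; exact hM
  have hιinf : Infinite ι := by
    by_contra hfin
    rw [not_infinite_iff_finite] at hfin
    haveI : Fintype ι := Fintype.ofFinite ι
    haveI : Finite M := Finite.of_injective
      (fun x : M => (b.repr x).support) (hsupp_inj.comp b.repr.toEquiv.injective)
    exact not_finite M
  apply le_antisymm
  · have : #ι ≤ #(ι →₀ ZMod 2) := Cardinal.mk_le_of_injective
      (Finsupp.single_left_injective (one_ne_zero) : Function.Injective
        (fun i : ι => Finsupp.single i (1 : ZMod 2)))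
    rw [← hBe] at this
    exact this
  · rw [Cardinal.mk_finset_of_infinite ι] at hBleF
    exact hBleF

lemma neg_direction {B : Type u} [AddCommGroup B] (hB2 : ∀ x : B, x + x = 0)
    {lam : Cardinal.{u}} (hlam : ℵ₀ < lam) (hB : #B = lam)
    (hi : ∀ κ : Cardinal.{u}, ℵ₀ ≤ κ → κ < lam → ∀ n : ℕ, 0 < n →
      ∀ (C : Type u) (c : B → C), #C ≤ κ →
        ∃ X : Set B, X.ncard = n ∧ ∃ k, ∀ s ∈ FS X, c s = k) :
    ∀ μ : Cardinal.{u}, μ < lam → (2 : Cardinal.{u}) ^ μ < lam := by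
  classical
  haveI : Fact (Nat.Prime 2) := ⟨Nat.prime_two⟩
  letI : Module (ZMod 2) B := AddCommGroup.zmodModule (n := 2) (by
    intro x; rw [two_nsmul, hB2])
  intro μ hμ
  by_contra h2
  push_neg at h2
  set κ := max μ ℵ₀ with hκdef
  have hκ : ℵ₀ ≤ κ := le_max_right _ _
  have hκlam : κ < lam := max_lt hμ hlam
  have hlam2κ : lam ≤ 2 ^ κ := h2.trans (Cardinal.power_le_power_left two_ne_zero
    (le_max_left _ _))
  -- the target space
  set D := κ.ord.ToType with hDdef
  have hmkD : #D = κ := Cardinal.mk_ord_toType κ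
  set V := D → ZMod 2 with hVdef
  have hmkV : #V = 2 ^ κ := by
    rw [hVdef, Cardinal.mk_arrow, hmkD, Cardinal.mk_fintype, ZMod.card]
    simp
  have hVinf : ℵ₀ ≤ #V := by
    rw [hmkV]
    exact hκ.trans ((Cardinal.cantor κ).le)
  -- a basis of B
  set ι := Module.Free.ChooseBasisIndex (ZMod 2) B with hιdef
  set b : Module.Basis ι (ZMod 2) B := Module.Free.chooseBasis (ZMod 2) B with hbdef
  have hmkι : #ι = lam := by
    rw [hιdef, mk_chooseBasisIndex B (by rw [hB]; exact hlam.le), hB]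
  -- a basis of V
  set ι' := Module.Free.ChooseBasisIndex (ZMod 2) V with hι'def
  set b' : Module.Basis ι' (ZMod 2) V := Module.Free.chooseBasis (ZMod 2) V with hb'def
  have hmkι' : #ι' = 2 ^ κ := by
    rw [hι'def, mk_chooseBasisIndex V hVinf, hmkV]
  -- embedding of index sets
  have hle : #ι ≤ #ι' := by rw [hmkι, hmkι']; exact hlam2κ
  obtain ⟨g⟩ := Cardinal.le_def _ _ |>.mp hle
  have hw : LinearIndependent (ZMod 2) (fun i : ι => b' (g i)) :=
    b'.linearIndependent.comp g g.injective
  set φ : B → V := fun x => Finsupp.linearCombination (ZMod 2) (fun i : ι => b' (g i)) (b.repr x)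
    with hφdef
  have hφinj : Function.Injective φ := by
    have h1 : Function.Injective
        (Finsupp.linearCombination (ZMod 2) (fun i : ι => b' (g i))) := hw
    exact h1.comp b.repr.toEquiv.injective
  have hφadd : ∀ x y : B, φ (x + y) = φ x + φ y := by
    intro x y
    rw [hφdef]
    simp only [map_add]
  have hφ0 : φ 0 = 0 := by rw [hφdef]; simp
  -- the colouring
  set supp : B → Set D := fun x => {d | φ x d ≠ 0} with hsuppdef
  set c : B → Option D := fun x =>
    if h : (supp x).Nonempty then some (wellFounded_lt.min (supp x) h) else none with hcdef
  have hCcard : #(Option D) ≤ κ := by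
    rw [Cardinal.mk_option, hmkD, Cardinal.add_one_eq hκ]
  obtain ⟨X, hX2, k, hk⟩ := hi κ hκ hκlam 2 (by norm_num) (Option D) c hCcard
  obtain ⟨a, bb, hab, rfl⟩ := Set.ncard_eq_two.mp hX2
  -- the three elements of FS X
  have hmema : a ∈ FS ({a, bb} : Set B) :=
    ⟨{a}, Finset.singleton_nonempty a, by simp, by simp⟩
  have hmemb : bb ∈ FS ({a, bb} : Set B) :=
    ⟨{bb}, Finset.singleton_nonempty bb, by simp, by simp⟩
  have hmems : a + bb ∈ FS ({a, bb} : Set B) :=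
    ⟨{a, bb}, ⟨a, by simp⟩, by simp, by rw [Finset.sum_pair hab]⟩
  have hca := hk a hmema
  have hcb := hk bb hmemb
  have hcs := hk (a + bb) hmems
  -- a + bb ≠ 0
  have hab0 : a + bb ≠ 0 := by
    intro h
    apply hab
    have := hB2 a
    exact add_left_cancel (a := a) (by rw [h, this])
  have hsome : ∀ x : B, x ≠ 0 → ∃ h : (supp x).Nonempty,
      c x = some (wellFounded_lt.min (supp x) h) := by
    intro x hx
    have hφx : φ x ≠ 0 := by
      intro h
      exact hx (hφinj (by rw [h, hφ0]))
    have hne : (supp x).Nonempty := by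
      rw [Function.ne_iff] at hφx
      obtain ⟨d, hd⟩ := hφx
      exact ⟨d, hd⟩
    exact ⟨hne, by rw [hcdef]; exact dif_pos hne⟩
  -- rule out a = 0 and bb = 0
  have hne0 : a ≠ 0 ∧ bb ≠ 0 := by
    constructor
    · intro h
      subst h
      obtain ⟨hne, hcb'⟩ := hsome bb (Ne.symm hab)
      have hc0 : c 0 = none := by
        rw [hcdef]
        apply dif_neg
        rintro ⟨d, hd⟩
        exact hd (by rw [hφ0]; rfl)
      rw [hc0] at hca
      rw [hcb', ← hca] at hcb
      exact Option.some_ne_none _ hcb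
    · intro h
      subst h
      obtain ⟨hne, hca'⟩ := hsome a (fun h => hab h)
      have hc0 : c 0 = none := by
        rw [hcdef]
        apply dif_neg
        rintro ⟨d, hd⟩
        exact hd (by rw [hφ0]; rfl)
      rw [hc0] at hcb
      rw [hca', ← hcb] at hca
      exact Option.some_ne_none _ hca
  obtain ⟨ha0, hb0⟩ := hne0
  obtain ⟨hnea, hca'⟩ := hsome a ha0
  obtain ⟨hneb, hcb'⟩ := hsome bb hb0
  obtain ⟨hnes, hcs'⟩ := hsome (a + bb) hab0
  set da := wellFounded_lt.min (supp a) hnea with hda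
  set db := wellFounded_lt.min (supp bb) hneb with hdb
  set ds := wellFounded_lt.min (supp (a + bb)) hnes with hds
  have h1 : da = db := by
    have := hca'.symm.trans (hca.trans (hcb.symm.trans hcb'))
    exact Option.some_injective _ this
  have h2 : da = ds := by
    have := hca'.symm.trans (hca.trans (hcs.symm.trans hcs'))
    exact Option.some_injective _ this
  have hma : da ∈ supp a := wellFounded_lt.min_mem _ hnea
  have hmb : db ∈ supp bb := wellFounded_lt.min_mem _ hneb
  have hms : ds ∈ supp (a + bb) := wellFounded_lt.min_mem _ hnes
  rw [← h1] at hmb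
  rw [← h2] at hms
  have hva : φ a da = 1 := zmod2_one_of_ne' _ hma
  have hvb : φ bb da = 1 := zmod2_one_of_ne' _ hmb
  apply hms
  rw [hφadd a bb]
  show φ a da + φ bb da = 0
  rw [hva, hvb]
  exact zmod2_one_add_one'

/-- For an uncountable cardinal `λ` and a Boolean group `B` of
cardinality `λ`, we have `B → (n)_κ^FS` for all infinite `κ < λ` and all positive `n`
if and only if `λ` is a strong limit cardinal. -/
theorem stmt_10 (lam : Cardinal.{u}) (hlam : Cardinal.aleph0 < lam)
    (B : Type u) [AddCommGroup B] (hB2 : ∀ x : B, x + x = 0)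
    (hB : Cardinal.mk B = lam) :
    (∀ κ : Cardinal.{u}, Cardinal.aleph0 ≤ κ → κ < lam → ∀ n : ℕ, 0 < n →
      ∀ (C : Type u) (c : B → C), Cardinal.mk C ≤ κ →
        ∃ X : Set B, X.ncard = n ∧ ∃ k, ∀ s ∈ FS X, c s = k) ↔
    (∀ μ : Cardinal.{u}, μ < lam → (2 : Cardinal.{u}) ^ μ < lam) := by
  constructor
  · intro hi
    exact neg_direction hB2 hlam hB hi
  · intro hSL κ hκ hκlam n hn C c hC
    exact pos_direction hB2 hlam hB hSL κ hκ hκlam n hn C c hC
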